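/- For any set X of q binary strings of length b, the number of unordered pairs {u,v} ⊆ X with Hamming distance exactly 1 is at most (q/2)·log₂(q). -/

import Mathlib

open Finset Real

lemma logb_one_add_ge (t : ℝ) (h0 : 0 ≤ t) (h1 : t ≤ 1) : t ≤ Real.logb 2 (1 + t) := by
  have h2 : (2:ℝ) ^ t ≤ 1 + t := by
    have hc := convexOn_exp.2 (Set.mem_univ (0:ℝ)) (Set.mem_univ (Real.log 2))
      (by linarith : (0:ℝ) ≤ 1 - t) h0 (by ring)
    simp only [smul_eq_mul, mul_zero, zero_add, Real.exp_zero,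
      Real.exp_log (by norm_num : (0:ℝ) < 2)] at hc
    have : (2:ℝ) ^ t = Real.exp (t * Real.log 2) := by
      rw [Real.rpow_def_of_pos (by norm_num)]; ring_nf
    rw [this]; linarith
  calc t = Real.logb 2 ((2:ℝ) ^ t) := (Real.logb_rpow (by norm_num) (by norm_num)).symm
    _ ≤ Real.logb 2 (1 + t) := Real.logb_le_logb_of_le (by norm_num)
        (Real.rpow_pos_of_pos (by norm_num) t) h2

lemma key_le (a b : ℕ) (hab : a ≤ b) :
    (a:ℝ) * Real.logb 2 a + b * Real.logb 2 b + 2 * a ≤ (a + b) * Real.logb 2 (a + b) := by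
  rcases Nat.eq_zero_or_pos a with rfl | ha
  · simp
  have hb : 0 < b := lt_of_lt_of_le ha hab
  have ha' : (1:ℝ) ≤ a := by exact_mod_cast ha
  have hb' : (1:ℝ) ≤ b := by exact_mod_cast hb
  have hab' : (a:ℝ) ≤ b := by exact_mod_cast hab
  have h1 : (a:ℝ) * Real.logb 2 a + a ≤ a * Real.logb 2 (a + b) := by
    have : Real.logb 2 (2 * a) ≤ Real.logb 2 (a + b) :=
      Real.logb_le_logb_of_le (by norm_num) (by linarith) (by linarith)
    have h2a : Real.logb 2 (2 * a) = 1 + Real.logb 2 a := by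
      rw [Real.logb_mul (by norm_num) (by linarith), Real.logb_self_eq_one (by norm_num)]
    nlinarith
  have h2 : (b:ℝ) * Real.logb 2 b + a ≤ b * Real.logb 2 (a + b) := by
    have ht := logb_one_add_ge ((a:ℝ)/b) (by positivity)
      (by rw [div_le_one (by linarith)]; exact hab')
    have heq : Real.logb 2 (a + b) = Real.logb 2 b + Real.logb 2 (1 + (a:ℝ)/b) := by
      rw [← Real.logb_mul (by linarith) (by positivity)]
      congr 1; field_simp; ring
    have : (b:ℝ) * ((a:ℝ)/b) = a := by field_simp
    nlinarith
  linarith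

lemma key_min (a b : ℕ) :
    (a:ℝ) * Real.logb 2 a + b * Real.logb 2 b + 2 * min a b ≤ (a + b) * Real.logb 2 (a + b) := by
  rcases le_total a b with h | h
  · simpa [min_eq_left h] using key_le a b h
  · have := key_le b a h
    rw [min_eq_right h]
    push_cast at this ⊢
    rw [show ((a:ℝ)+(b:ℝ)) = ((b:ℝ)+(a:ℝ)) by ring]; linarith

lemma hd_succ {n : ℕ} (f g : Fin (n+1) → Bool) :
    hammingDist f g = (if f 0 = g 0 then 0 else 1) + hammingDist (f ∘ Fin.succ) (g ∘ Fin.succ) := by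
  simp only [hammingDist, Finset.card_filter, Fin.sum_univ_succ, Function.comp]
  congr 1
  split <;> simp_all

lemma hd_same {n : ℕ} {f g : Fin (n+1) → Bool} (h : f 0 = g 0) :
    hammingDist f g = hammingDist (f ∘ Fin.succ) (g ∘ Fin.succ) := by
  rw [hd_succ]; simp [h]

lemma hd_diff {n : ℕ} {f g : Fin (n+1) → Bool} (h : f 0 ≠ g 0) :
    hammingDist f g = 1 ↔ f ∘ Fin.succ = g ∘ Fin.succ := by
  rw [hd_succ, if_neg h, ← hammingDist_eq_zero]
  omega

lemma ext_head_tail {n : ℕ} {f g : Fin (n+1) → Bool} (h0 : f 0 = g 0)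
    (ht : f ∘ Fin.succ = g ∘ Fin.succ) : f = g := by
  funext i
  refine Fin.cases h0 (fun j => ?_) i
  exact congrFun ht j

lemma main_bound : ∀ (b : ℕ) (X : Finset (Fin b → Bool)),
    (((X ×ˢ X).filter (fun p => hammingDist p.1 p.2 = 1)).card : ℝ)
      ≤ X.card * Real.logb 2 X.card := by
  intro b
  induction b with
  | zero =>
    intro X
    have h1 : ((X ×ˢ X).filter (fun p => hammingDist p.1 p.2 = 1)) = ∅ := by
      rw [filter_eq_empty_iff]
      intro p _
      have h := hammingDist_le_card_fintype (x := p.1) (y := p.2)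
      simp only [Fintype.card_fin] at h
      omega
    have h2 : X.card ≤ 1 := by
      have := Finset.card_le_card (Finset.subset_univ X)
      simpa using this
    rw [h1]
    interval_cases h : X.card <;> simp
  | succ n ih =>
    intro X
    classical
    set tl : (Fin (n+1) → Bool) → (Fin n → Bool) := fun f => f ∘ Fin.succ with htl
    set X0 := (X.filter fun f => f 0 = false).image tl with hX0
    set X1 := (X.filter fun f => f 0 = true).image tl with hX1
    set S := (X ×ˢ X).filter (fun p => hammingDist p.1 p.2 = 1) with hS
    -- cardinalities
    have inj0 : Set.InjOn tl ↑(X.filter fun f => f 0 = false) := by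
      intro f hf g hg h
      simp only [coe_filter, Set.mem_setOf_eq] at hf hg
      exact ext_head_tail (hf.2.trans hg.2.symm) h
    have inj1 : Set.InjOn tl ↑(X.filter fun f => f 0 = true) := by
      intro f hf g hg h
      simp only [coe_filter, Set.mem_setOf_eq] at hf hg
      exact ext_head_tail (hf.2.trans hg.2.symm) h
    have c0 : X0.card = (X.filter fun f => f 0 = false).card :=
      Finset.card_image_of_injOn inj0
    have c1 : X1.card = (X.filter fun f => f 0 = true).card :=
      Finset.card_image_of_injOn inj1
    have csum : X0.card + X1.card = X.card := by
      have hsum := Finset.card_filter_add_card_filter_not (s := X)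
        (p := fun f => f 0 = false)
      have hfeq : X.filter (fun f => ¬ f 0 = false) = X.filter (fun f => f 0 = true) := by
        apply Finset.filter_congr; intro f _; simp
      rw [hfeq] at hsum
      rw [c0, c1]; exact hsum
    -- split of S into four pieces
    have split1 : S.card = (S.filter fun p => p.1 0 = false).card
        + (S.filter fun p => p.1 0 = true).card := by
      have hsum := Finset.card_filter_add_card_filter_not (s := S)
        (p := fun p => p.1 0 = false)
      have hfeq : S.filter (fun p => ¬ p.1 0 = false) = S.filter (fun p => p.1 0 = true) := by
        apply Finset.filter_congr; intro p _; simp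
      rw [hfeq] at hsum
      exact hsum.symm
    have split2 : (S.filter fun p => p.1 0 = false).card
        = (S.filter fun p => p.1 0 = false ∧ p.2 0 = false).card
        + (S.filter fun p => p.1 0 = false ∧ p.2 0 = true).card := by
      have hsum := Finset.card_filter_add_card_filter_not
        (s := S.filter fun p => p.1 0 = false) (p := fun p => p.2 0 = false)
      have e1 : (S.filter fun p => p.1 0 = false).filter (fun p => p.2 0 = false)
          = S.filter (fun p => p.1 0 = false ∧ p.2 0 = false) := by
        ext p; simp only [Finset.mem_filter]; tauto
      have e2 : (S.filter fun p => p.1 0 = false).filter (fun p => ¬ p.2 0 = false)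
          = S.filter (fun p => p.1 0 = false ∧ p.2 0 = true) := by
        ext p; simp only [Finset.mem_filter, Bool.not_eq_false]; tauto
      rw [e1, e2] at hsum
      exact hsum.symm
    have split3 : (S.filter fun p => p.1 0 = true).card
        = (S.filter fun p => p.1 0 = true ∧ p.2 0 = false).card
        + (S.filter fun p => p.1 0 = true ∧ p.2 0 = true).card := by
      have hsum := Finset.card_filter_add_card_filter_not
        (s := S.filter fun p => p.1 0 = true) (p := fun p => p.2 0 = false)
      have e1 : (S.filter fun p => p.1 0 = true).filter (fun p => p.2 0 = false)
          = S.filter (fun p => p.1 0 = true ∧ p.2 0 = false) := by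
        ext p; simp only [Finset.mem_filter]; tauto
      have e2 : (S.filter fun p => p.1 0 = true).filter (fun p => ¬ p.2 0 = false)
          = S.filter (fun p => p.1 0 = true ∧ p.2 0 = true) := by
        ext p; simp only [Finset.mem_filter, Bool.not_eq_false]; tauto
      rw [e1, e2] at hsum
      exact hsum.symm
    -- same-head bounds
    have bff : (S.filter fun p => p.1 0 = false ∧ p.2 0 = false).card
        ≤ ((X0 ×ˢ X0).filter (fun p => hammingDist p.1 p.2 = 1)).card := by
      apply Finset.card_le_card_of_injOn (fun p => (tl p.1, tl p.2))
      · intro p hp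
        simp only [hS, Finset.mem_coe, Finset.mem_filter, Finset.mem_product] at hp
        obtain ⟨⟨⟨m1, m2⟩, hd⟩, h1, h2⟩ := hp
        simp only [Finset.mem_coe, Finset.mem_filter, Finset.mem_product]
        refine ⟨⟨Finset.mem_image_of_mem tl (Finset.mem_filter.2 ⟨m1, h1⟩),
          Finset.mem_image_of_mem tl (Finset.mem_filter.2 ⟨m2, h2⟩)⟩, ?_⟩
        rw [← hd_same (h1.trans h2.symm)]; exact hd
      · intro p hp q hq h
        simp only [Finset.coe_filter, Set.mem_setOf_eq] at hp hq
        obtain ⟨-, hp1, hp2⟩ := hp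
        obtain ⟨-, hq1, hq2⟩ := hq
        have h1 := congrArg Prod.fst h
        have h2 := congrArg Prod.snd h
        exact Prod.ext (ext_head_tail (hp1.trans hq1.symm) h1)
          (ext_head_tail (hp2.trans hq2.symm) h2)
    have btt : (S.filter fun p => p.1 0 = true ∧ p.2 0 = true).card
        ≤ ((X1 ×ˢ X1).filter (fun p => hammingDist p.1 p.2 = 1)).card := by
      apply Finset.card_le_card_of_injOn (fun p => (tl p.1, tl p.2))
      · intro p hp
        simp only [hS, Finset.mem_coe, Finset.mem_filter, Finset.mem_product] at hp
        obtain ⟨⟨⟨m1, m2⟩, hd⟩, h1, h2⟩ := hp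
        simp only [Finset.mem_coe, Finset.mem_filter, Finset.mem_product]
        refine ⟨⟨Finset.mem_image_of_mem tl (Finset.mem_filter.2 ⟨m1, h1⟩),
          Finset.mem_image_of_mem tl (Finset.mem_filter.2 ⟨m2, h2⟩)⟩, ?_⟩
        rw [← hd_same (h1.trans h2.symm)]; exact hd
      · intro p hp q hq h
        simp only [Finset.coe_filter, Set.mem_setOf_eq] at hp hq
        obtain ⟨-, hp1, hp2⟩ := hp
        obtain ⟨-, hq1, hq2⟩ := hq
        have h1 := congrArg Prod.fst h
        have h2 := congrArg Prod.snd h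
        exact Prod.ext (ext_head_tail (hp1.trans hq1.symm) h1)
          (ext_head_tail (hp2.trans hq2.symm) h2)
    -- cross bounds
    have bft : (S.filter fun p => p.1 0 = false ∧ p.2 0 = true).card ≤ (X0 ∩ X1).card := by
      apply Finset.card_le_card_of_injOn (fun p => tl p.1)
      · intro p hp
        simp only [hS, Finset.mem_coe, Finset.mem_filter, Finset.mem_product] at hp
        obtain ⟨⟨⟨m1, m2⟩, hd⟩, h1, h2⟩ := hp
        have hne : p.1 0 ≠ p.2 0 := by rw [h1, h2]; simp
        have hteq : tl p.1 = tl p.2 := (hd_diff hne).1 hd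
        refine Finset.mem_inter.2 ⟨Finset.mem_image_of_mem tl (Finset.mem_filter.2 ⟨m1, h1⟩), ?_⟩
        beta_reduce
        rw [hteq]
        exact Finset.mem_image_of_mem tl (Finset.mem_filter.2 ⟨m2, h2⟩)
      · intro p hp q hq h
        simp only [hS, Finset.coe_filter, Set.mem_setOf_eq, Finset.mem_filter,
          Finset.mem_product] at hp hq
        obtain ⟨⟨-, hdp⟩, hp1, hp2⟩ := hp
        obtain ⟨⟨-, hdq⟩, hq1, hq2⟩ := hq
        have hnep : p.1 0 ≠ p.2 0 := by rw [hp1, hp2]; simp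
        have hneq : q.1 0 ≠ q.2 0 := by rw [hq1, hq2]; simp
        have e1 : p.1 = q.1 := ext_head_tail (hp1.trans hq1.symm) h
        have e2 : p.2 ∘ Fin.succ = q.2 ∘ Fin.succ := by
          rw [← (hd_diff hnep).1 hdp, ← (hd_diff hneq).1 hdq]
          exact h
        exact Prod.ext e1 (ext_head_tail (hp2.trans hq2.symm) e2)
    have btf : (S.filter fun p => p.1 0 = true ∧ p.2 0 = false).card ≤ (X0 ∩ X1).card := by
      apply Finset.card_le_card_of_injOn (fun p => tl p.2)
      · intro p hp
        simp only [hS, Finset.mem_coe, Finset.mem_filter, Finset.mem_product] at hp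
        obtain ⟨⟨⟨m1, m2⟩, hd⟩, h1, h2⟩ := hp
        have hne : p.1 0 ≠ p.2 0 := by rw [h1, h2]; simp
        have hteq : tl p.1 = tl p.2 := (hd_diff hne).1 hd
        refine Finset.mem_inter.2 ⟨Finset.mem_image_of_mem tl (Finset.mem_filter.2 ⟨m2, h2⟩), ?_⟩
        beta_reduce
        rw [← hteq]
        exact Finset.mem_image_of_mem tl (Finset.mem_filter.2 ⟨m1, h1⟩)
      · intro p hp q hq h
        simp only [hS, Finset.coe_filter, Set.mem_setOf_eq, Finset.mem_filter,
          Finset.mem_product] at hp hq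
        obtain ⟨⟨-, hdp⟩, hp1, hp2⟩ := hp
        obtain ⟨⟨-, hdq⟩, hq1, hq2⟩ := hq
        have hnep : p.1 0 ≠ p.2 0 := by rw [hp1, hp2]; simp
        have hneq : q.1 0 ≠ q.2 0 := by rw [hq1, hq2]; simp
        have e1 : p.1 ∘ Fin.succ = q.1 ∘ Fin.succ := by
          rw [(hd_diff hnep).1 hdp, (hd_diff hneq).1 hdq]
          exact h
        exact Prod.ext (ext_head_tail (hp1.trans hq1.symm) e1)
          (ext_head_tail (hp2.trans hq2.symm) h)
    have hinter : (X0 ∩ X1).card ≤ min X0.card X1.card :=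
      le_min (Finset.card_le_card Finset.inter_subset_left)
        (Finset.card_le_card Finset.inter_subset_right)
    -- combine in ℕ
    have hft : (S.filter fun p => p.1 0 = false ∧ p.2 0 = true).card
        ≤ min X0.card X1.card := le_trans bft hinter
    have htf : (S.filter fun p => p.1 0 = true ∧ p.2 0 = false).card
        ≤ min X0.card X1.card := le_trans btf hinter
    have hnat : S.card ≤ ((X0 ×ˢ X0).filter (fun p => hammingDist p.1 p.2 = 1)).card
        + ((X1 ×ˢ X1).filter (fun p => hammingDist p.1 p.2 = 1)).card
        + 2 * min X0.card X1.card := by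
      have h2 : 2 * min X0.card X1.card = min X0.card X1.card + min X0.card X1.card := by ring
      rw [h2]
      linarith [split1, split2, split3, bff, btt, hft, htf]
    -- pass to ℝ
    have hR : (S.card : ℝ)
        ≤ (((X0 ×ˢ X0).filter (fun p => hammingDist p.1 p.2 = 1)).card : ℝ)
        + (((X1 ×ˢ X1).filter (fun p => hammingDist p.1 p.2 = 1)).card : ℝ)
        + 2 * (min X0.card X1.card : ℕ) := by exact_mod_cast hnat
    have hmin : ((min X0.card X1.card : ℕ) : ℝ) = min (X0.card : ℝ) (X1.card : ℝ) := by
      push_cast; rfl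
    have hkey := key_min X0.card X1.card
    have hfin : (S.card : ℝ) ≤ ((X0.card : ℝ) + X1.card)
        * Real.logb 2 ((X0.card : ℝ) + X1.card) := by
      linarith [ih X0, ih X1, hkey, hR, hmin.le, hmin.ge]
    have hc : ((X.card : ℕ) : ℝ) = (X0.card : ℝ) + X1.card := by
      rw [← csum]; push_cast; ring
    rw [hc]
    exact hfin

theorem hamming_distance_one_output_bound (b q : ℕ)
    (X : Finset (Fin b → Bool)) (hX : X.card = q) :
    (((X ×ˢ X).filter (fun p => hammingDist p.1 p.2 = 1)).card : ℝ) / 2 ≤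
      (q : ℝ) / 2 * Real.logb 2 q := by
  have := main_bound b X
  rw [hX] at this
  linarith
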